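/- Let H be a real Hilbert space and e ∈ H with ‖e‖ = 1. Define C := {v ∈ H : ⟨e, v⟩ ≥ ‖v‖/2}. Then C is a closed convex proper cone (i.e. t·v ∈ C for all t ≥ 0 and v ∈ C, and C ∩ (−C) = {0}), the closed ball B(e, 1/6) is contained in C, and the closed ball B(e, 1/6) is contained in the dual cone C′ = {u ∈ H : ⟨u, v⟩ ≥ 0 for all v ∈ C}. -/
import Mathlib


open scoped RealInnerProductSpace

noncomputable section

variable {H : Type*}

/-- The dual cone `C' = {u : ⟪u, v⟫ ≥ 0 for all v ∈ C}`. -/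
def dualCone [NormedAddCommGroup H] [InnerProductSpace ℝ H] (C : Set H) : Set H :=
  {u : H | ∀ v ∈ C, 0 ≤ ⟪u, v⟫}

/-- Example 3.1(ii): the aperture cone `C = {v : ⟪e, v⟫ ≥ ‖v‖/2}` around a unit vector `e`
is a closed convex proper cone containing the closed ball `B(e, 1/6)`, which is also
contained in the dual cone `C'`. -/
theorem aperture_cone_satisfies_condition_C
    [NormedAddCommGroup H] [InnerProductSpace ℝ H]
    (e : H) (he : ‖e‖ = 1)
    (C : Set H) (hC : C = {v : H | ‖v‖ / 2 ≤ ⟪e, v⟫}) :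
    IsClosed C ∧ Convex ℝ C ∧ (∀ t : ℝ, 0 ≤ t → ∀ v ∈ C, t • v ∈ C) ∧
    C ∩ (-C) = {0} ∧
    Metric.closedBall e (1 / 6) ⊆ C ∧
    Metric.closedBall e (1 / 6) ⊆ dualCone C := by
  subst hC
  refine ⟨?_, ?_, ?_, ?_, ?_, ?_⟩
  · have : {v : H | ‖v‖ / 2 ≤ ⟪e, v⟫} = {v : H | 0 ≤ ⟪e, v⟫ - ‖v‖ / 2} := by
      ext v; simp [sub_nonneg]
    rw [this]
    exact isClosed_le continuous_const
      (((continuous_const.inner continuous_id).sub ((continuous_norm).div_const 2)))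
  · intro v hv w hw a b ha hb hab
    simp only [Set.mem_setOf_eq] at *
    rw [inner_add_right, real_inner_smul_right, real_inner_smul_right]
    calc ‖a • v + b • w‖ / 2 ≤ (a * ‖v‖ + b * ‖w‖) / 2 := by
          apply div_le_div_of_nonneg_right _ (by norm_num) |>.trans_eq rfl
          calc ‖a • v + b • w‖ ≤ ‖a • v‖ + ‖b • w‖ := norm_add_le _ _
            _ = a * ‖v‖ + b * ‖w‖ := by
                rw [norm_smul, norm_smul, Real.norm_eq_abs, Real.norm_eq_abs,
                  abs_of_nonneg ha, abs_of_nonneg hb]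
      _ = a * (‖v‖ / 2) + b * (‖w‖ / 2) := by ring
      _ ≤ a * ⟪e, v⟫ + b * ⟪e, w⟫ := by
          gcongr
  · intro t ht v hv
    simp only [Set.mem_setOf_eq] at *
    rw [real_inner_smul_right, norm_smul, Real.norm_eq_abs, abs_of_nonneg ht]
    calc t * ‖v‖ / 2 = t * (‖v‖ / 2) := by ring
      _ ≤ t * ⟪e, v⟫ := by gcongr
  · ext v
    simp only [Set.mem_inter_iff, Set.mem_neg, Set.mem_setOf_eq, Set.mem_singleton_iff]
    constructor
    · rintro ⟨h1, h2⟩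
      rw [norm_neg, inner_neg_right] at h2
      have : ‖v‖ ≤ 0 := by linarith [norm_nonneg v]
      exact norm_le_zero_iff.mp this
    · rintro rfl
      simp
  · intro v hv
    rw [Metric.mem_closedBall, dist_eq_norm] at hv
    simp only [Set.mem_setOf_eq]
    have h1 : ⟪e, v - e⟫ ≥ -(1/6 : ℝ) := by
      have := abs_real_inner_le_norm e (v - e)
      have : |⟪e, v - e⟫| ≤ 1/6 := by
        calc |⟪e, v - e⟫| ≤ ‖e‖ * ‖v - e‖ := abs_real_inner_le_norm _ _
          _ ≤ 1 * (1/6) := by rw [he, one_mul]; simpa using hv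
          _ = 1/6 := by norm_num
      linarith [neg_abs_le ⟪e, v - e⟫]
    have h2 : ⟪e, v⟫ = 1 + ⟪e, v - e⟫ := by
      rw [inner_sub_right, real_inner_self_eq_norm_sq, he]; ring
    have h3 : ‖v‖ ≤ 7/6 := by
      calc ‖v‖ = ‖e + (v - e)‖ := by congr 1; abel
        _ ≤ ‖e‖ + ‖v - e‖ := norm_add_le _ _
        _ ≤ 1 + 1/6 := by rw [he]; simpa using hv
        _ = 7/6 := by norm_num
    linarith [norm_nonneg v]
  · intro u hu v hv
    rw [Metric.mem_closedBall, dist_eq_norm] at hu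
    simp only [Set.mem_setOf_eq] at hv
    have h1 : ⟪u, v⟫ = ⟪e, v⟫ + ⟪u - e, v⟫ := by
      rw [inner_sub_left]; ring
    have h2 : ⟪u - e, v⟫ ≥ -(‖v‖ / 6) := by
      have : |⟪u - e, v⟫| ≤ ‖v‖ / 6 := by
        calc |⟪u - e, v⟫| ≤ ‖u - e‖ * ‖v‖ := abs_real_inner_le_norm _ _
          _ ≤ (1/6) * ‖v‖ := by gcongr
          _ = ‖v‖ / 6 := by ring
      linarith [neg_abs_le ⟪u - e, v⟫]
    linarith [norm_nonneg v]
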